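/- Combinatorial core of the reflection lemma (Lemma on faces in the inner 3-ball): let n be a positive integer and let a, b be elements of ℤ/nℤ with a ≠ b. Define permutations σ and τ of ℤ/nℤ by σ(k) = a − k and τ(k) = b − k, and assume both are fixed-point free: σ(k) ≠ k and τ(k) ≠ k for every k ∈ ℤ/nℤ. Then all orbits of the subgroup of permutations of ℤ/nℤ generated by σ and τ have the same cardinality; that is, for all x, y ∈ ℤ/nℤ, the orbit of x under ⟨σ, τ⟩ and the orbit of y under ⟨σ, τ⟩ have equal cardinality. -/

import Mathlib

section Aux

variable {n : ℕ}

lemma refl_orbit_card (n : ℕ) (hn : 0 < n) (a b : ZMod n)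
    (σ τ : Equiv.Perm (ZMod n))
    (hσ : ∀ k : ZMod n, σ k = a - k) (hτ : ∀ k : ZMod n, τ k = b - k)
    (hσfree : ∀ k : ZMod n, σ k ≠ k) (hτfree : ∀ k : ZMod n, τ k ≠ k)
    (x : ZMod n) :
    Nat.card (MulAction.orbit (Subgroup.closure ({σ, τ} : Set (Equiv.Perm (ZMod n)))) x) =
      2 * Set.ncard ((AddSubgroup.zmultiples (b - a) : AddSubgroup (ZMod n)) : Set (ZMod n)) := by
  haveI : NeZero n := ⟨hn.ne'⟩
  set G := Subgroup.closure ({σ, τ} : Set (Equiv.Perm (ZMod n))) with hG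
  set d : ZMod n := b - a with hd
  set H : AddSubgroup (ZMod n) := AddSubgroup.zmultiples d with hH
  have hσG : σ ∈ G := Subgroup.subset_closure (by simp)
  have hτG : τ ∈ G := Subgroup.subset_closure (by simp)
  have ha : ∀ k : ZMod n, k + k ≠ a := by
    intro k h
    exact hσfree k (by rw [hσ k, ← h]; ring)
  have hb : ∀ k : ZMod n, k + k ≠ b := by
    intro k h
    exact hτfree k (by rw [hτ k, ← h]; ring)
  -- the rotation
  set ρ : Equiv.Perm (ZMod n) := τ * σ with hρdef
  have hρ : ∀ k : ZMod n, ρ k = k + d := by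
    intro k
    simp [hρdef, Equiv.Perm.mul_apply, hσ, hτ, hd]
    ring
  have hρG : ρ ∈ G := mul_mem hτG hσG
  have hρinv : ∀ k : ZMod n, ρ⁻¹ k = k - d := by
    intro k
    have : ρ (k - d) = k := by rw [hρ]; ring
    simpa [Equiv.Perm.inv_def, Equiv.symm_apply_eq] using this.symm
  have hρpow : ∀ (m : ℤ) (k : ZMod n), ((ρ ^ m : Equiv.Perm (ZMod n))) k = k + (m : ZMod n) * d := by
    intro m
    induction m using Int.induction_on with
    | zero => intro k; simp
    | succ i ih =>
        intro k
        rw [zpow_add_one, Equiv.Perm.mul_apply, ih, hρ]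
        push_cast; ring
    | pred i ih =>
        intro k
        rw [zpow_sub_one, Equiv.Perm.mul_apply, hρinv, ih]
        push_cast; ring
  -- structure of elements of G
  have struct : ∀ g ∈ G, (∃ h ∈ H, ∀ k, g k = k + h) ∨ (∃ h ∈ H, ∀ k, g k = a - k + h) := by
    intro g hg
    induction hg using Subgroup.closure_induction with
    | mem p hp =>
        rcases hp with rfl | rfl
        · exact Or.inr ⟨0, zero_mem _, fun k => by rw [hσ]; ring⟩
        · exact Or.inr ⟨d, AddSubgroup.mem_zmultiples d, fun k => by rw [hτ, hd]; ring⟩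
    | one => exact Or.inl ⟨0, zero_mem _, fun k => by simp⟩
    | mul g₁ g₂ hg₁ hg₂ ih₁ ih₂ =>
        rcases ih₁ with ⟨h₁, hm₁, he₁⟩ | ⟨h₁, hm₁, he₁⟩ <;>
          rcases ih₂ with ⟨h₂, hm₂, he₂⟩ | ⟨h₂, hm₂, he₂⟩
        · exact Or.inl ⟨h₂ + h₁, add_mem hm₂ hm₁,
            fun k => by rw [Equiv.Perm.mul_apply, he₂, he₁]; ring⟩
        · exact Or.inr ⟨h₂ + h₁, add_mem hm₂ hm₁,
            fun k => by rw [Equiv.Perm.mul_apply, he₂, he₁]; ring⟩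
        · exact Or.inr ⟨h₁ - h₂, sub_mem hm₁ hm₂,
            fun k => by rw [Equiv.Perm.mul_apply, he₂, he₁]; ring⟩
        · exact Or.inl ⟨h₁ - h₂, sub_mem hm₁ hm₂,
            fun k => by rw [Equiv.Perm.mul_apply, he₂, he₁]; ring⟩
    | inv g hg ih =>
        rcases ih with ⟨h, hm, he⟩ | ⟨h, hm, he⟩
        · refine Or.inl ⟨-h, neg_mem hm, fun k => ?_⟩
          have : g (k + -h) = k := by rw [he]; ring
          simpa [Equiv.Perm.inv_def, Equiv.symm_apply_eq] using this.symm
        · refine Or.inr ⟨h, hm, fun k => ?_⟩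
          have : g (a - k + h) = k := by rw [he]; ring
          simpa [Equiv.Perm.inv_def, Equiv.symm_apply_eq] using this.symm
  -- orbit description
  have horbit : (MulAction.orbit G x : Set (ZMod n)) =
      (fun h => x + h) '' (H : Set (ZMod n)) ∪ (fun h => a - x + h) '' (H : Set (ZMod n)) := by
    ext z
    constructor
    · rintro ⟨⟨g, hg⟩, rfl⟩
      rcases struct g hg with ⟨h, hm, he⟩ | ⟨h, hm, he⟩
      · exact Or.inl ⟨h, hm, by simp [Subgroup.smul_def, Equiv.Perm.smul_def, he x]⟩
      · exact Or.inr ⟨h, hm, by simp [Subgroup.smul_def, Equiv.Perm.smul_def, he x]⟩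
    · rintro (⟨h, hm, rfl⟩ | ⟨h, hm, rfl⟩)
      · obtain ⟨m, rfl⟩ := AddSubgroup.mem_zmultiples_iff.mp hm
        refine ⟨⟨ρ ^ m, zpow_mem hρG m⟩, ?_⟩
        simp only [Subgroup.smul_def, Equiv.Perm.smul_def, hρpow m x]
        rw [zsmul_eq_mul]
      · obtain ⟨m, rfl⟩ := AddSubgroup.mem_zmultiples_iff.mp hm
        refine ⟨⟨ρ ^ m * σ, mul_mem (zpow_mem hρG m) hσG⟩, ?_⟩
        simp only [Subgroup.smul_def, Equiv.Perm.smul_def, Equiv.Perm.mul_apply, hσ, hρpow m]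
        rw [zsmul_eq_mul]
  -- disjointness
  have disj : Disjoint ((fun h => x + h) '' (H : Set (ZMod n)))
      ((fun h => a - x + h) '' (H : Set (ZMod n))) := by
    rw [Set.disjoint_left]
    rintro z ⟨h₁, hm₁, rfl⟩ ⟨h₂, hm₂, heq⟩
    obtain ⟨m, hm⟩ := AddSubgroup.mem_zmultiples_iff.mp (sub_mem hm₁ hm₂ : h₁ - h₂ ∈ H)
    rw [zsmul_eq_mul] at hm
    have hb' : b = a + d := by rw [hd]; ring
    rcases Int.even_or_odd m with ⟨s, hs⟩ | ⟨s, hs⟩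
    · apply ha (x + (s : ZMod n) * d)
      have hm' : ((s : ZMod n) + (s : ZMod n)) * d = h₁ - h₂ := by
        rw [← hm, hs]; push_cast; ring
      linear_combination hm' - heq
    · apply hb (a - x - (s : ZMod n) * d)
      have hm' : (2 * (s : ZMod n) + 1) * d = h₁ - h₂ := by
        rw [← hm, hs]; push_cast; ring
      rw [hb']
      linear_combination heq - hm'
  -- injectivity of the two translations
  have hinj1 : Function.Injective (fun h : ZMod n => x + h) := fun u v huv => by
    simpa using huv
  have hinj2 : Function.Injective (fun h : ZMod n => a - x + h) := fun u v huv => by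
    simpa using huv
  rw [Nat.card_coe_set_eq, horbit,
    Set.ncard_union_eq disj (Set.toFinite _) (Set.toFinite _),
    Set.ncard_image_of_injective _ hinj1, Set.ncard_image_of_injective _ hinj2]
  ring

end Aux

/-- Combinatorial core of the reflection lemma: if `σ, τ` are the fixed-point-free
"reflections" `k ↦ a - k` and `k ↦ b - k` of `ℤ/nℤ` with `a ≠ b`, then all orbits of the
subgroup of permutations generated by `σ` and `τ` have the same cardinality. -/
theorem reflection_lemma_orbits_same_card
    (n : ℕ) (hn : 0 < n) (a b : ZMod n) (hab : a ≠ b)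
    (σ τ : Equiv.Perm (ZMod n))
    (hσ : ∀ k : ZMod n, σ k = a - k) (hτ : ∀ k : ZMod n, τ k = b - k)
    (hσfree : ∀ k : ZMod n, σ k ≠ k) (hτfree : ∀ k : ZMod n, τ k ≠ k)
    (x y : ZMod n) :
    Nat.card (MulAction.orbit (Subgroup.closure ({σ, τ} : Set (Equiv.Perm (ZMod n)))) x) =
      Nat.card (MulAction.orbit (Subgroup.closure ({σ, τ} : Set (Equiv.Perm (ZMod n)))) y) := by
  rw [refl_orbit_card n hn a b σ τ hσ hτ hσfree hτfree x,
    refl_orbit_card n hn a b σ τ hσ hτ hσfree hτfree y]
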